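/- Under the hypotheses of the single-vehicle kinematic model (reference wheel at origin with steering θ₁, second wheel at (a₂,b₂) with steering θ₂, yaw rate ψ̇ = v sin(θ₂-θ₁)/(a₂ cos θ₂ + b₂ sin θ₂)), any third wheel at body coordinates (a_k, b_k) with steering angle θ_k satisfying its own no-slip constraint must obey (tan θ_k - tan θ₁)/(tan θ₂ - tan θ₁) = (a_k + b_k tan θ_k)/(a₂ + b₂ tan θ₂), provided all cosines and denominators involved are nonzero. -/

import Mathlib

open Real

/-- Generalized Ackermann steering condition: any further wheel of a single
rigid vehicle satisfying its own no-slip constraint must have a dependent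
steering angle related to the two independent ones. -/
theorem generalized_ackermann_condition
    (ψ θ₁ θ₂ θk a₂ b₂ ak bk v xdot ydot ψdot : ℝ)
    (hv : v ≠ 0)
    (hx : xdot = v * Real.cos (ψ + θ₁))
    (hy : ydot = v * Real.sin (ψ + θ₁))
    (hden : a₂ * Real.cos θ₂ + b₂ * Real.sin θ₂ ≠ 0)
    (hψ : ψdot = v * Real.sin (θ₂ - θ₁) / (a₂ * Real.cos θ₂ + b₂ * Real.sin θ₂))
    (hk : -xdot * Real.sin (ψ + θk) + ydot * Real.cos (ψ + θk)
      + ψdot * (ak * Real.cos θk + bk * Real.sin θk) = 0)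
    (hc1 : Real.cos θ₁ ≠ 0) (hc2 : Real.cos θ₂ ≠ 0) (hck : Real.cos θk ≠ 0)
    (htan : Real.tan θ₂ - Real.tan θ₁ ≠ 0)
    (hden2 : a₂ + b₂ * Real.tan θ₂ ≠ 0) :
    (Real.tan θk - Real.tan θ₁) / (Real.tan θ₂ - Real.tan θ₁)
      = (ak + bk * Real.tan θk) / (a₂ + b₂ * Real.tan θ₂) := by
  subst hx hy hψ
  -- collapse the ψ-dependence
  have hcol : Real.sin (θ₁ - θk)
      = Real.sin (ψ + θ₁) * Real.cos (ψ + θk)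
        - Real.cos (ψ + θ₁) * Real.sin (ψ + θk) := by
    rw [← Real.sin_sub]; ring_nf
  have key : Real.sin (θk - θ₁) * (a₂ * Real.cos θ₂ + b₂ * Real.sin θ₂)
      = Real.sin (θ₂ - θ₁) * (ak * Real.cos θk + bk * Real.sin θk) := by
    field_simp at hk
    have h1 : v * Real.sin (θ₁ - θk) * (a₂ * Real.cos θ₂ + b₂ * Real.sin θ₂)
        + v * Real.sin (θ₂ - θ₁) * (ak * Real.cos θk + bk * Real.sin θk) = 0 := by
      rw [hcol]; linear_combination hk
    have hneg : Real.sin (θ₁ - θk) = -Real.sin (θk - θ₁) := by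
      rw [← Real.sin_neg]; ring_nf
    rw [hneg] at h1
    apply mul_left_cancel₀ hv
    linear_combination -h1
  -- rewrite the tangent differences as sines of differences
  have e1 : Real.tan θk - Real.tan θ₁
      = Real.sin (θk - θ₁) / (Real.cos θk * Real.cos θ₁) := by
    rw [Real.sin_sub, Real.tan_eq_sin_div_cos, Real.tan_eq_sin_div_cos]
    field_simp
  have e2 : Real.tan θ₂ - Real.tan θ₁
      = Real.sin (θ₂ - θ₁) / (Real.cos θ₂ * Real.cos θ₁) := by
    rw [Real.sin_sub, Real.tan_eq_sin_div_cos, Real.tan_eq_sin_div_cos]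
    field_simp
  have e3 : ak + bk * Real.tan θk
      = (ak * Real.cos θk + bk * Real.sin θk) / Real.cos θk := by
    rw [Real.tan_eq_sin_div_cos]; field_simp
  have e4 : a₂ + b₂ * Real.tan θ₂
      = (a₂ * Real.cos θ₂ + b₂ * Real.sin θ₂) / Real.cos θ₂ := by
    rw [Real.tan_eq_sin_div_cos]; field_simp
  have hs : Real.sin (θ₂ - θ₁) ≠ 0 := by
    intro h; apply htan; rw [e2, h, zero_div]
  rw [e1, e2, e3, e4]
  field_simp
  rw [eq_div_iff (by rwa [mul_comm] at hden)]
  linear_combination key
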